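/- Let q = 2^m with m ≥ 3, and let f be an o-polynomial over GF(q). For any two distinct u1, u2 in GF(q), the number of pairs (b,c) in GF(q)* × GF(q) such that {u1, u2} ⊆ {f(x)+bx+c : x in GF(q)} equals q(q-2)/4. -/

import Mathlib

/-- A function is 2-to-1 if every element of its image has exactly two preimages. -/
def TwoToOne {F : Type*} (g : F → F) : Prop :=
  ∀ y : F, (∃ x : F, g x = y) → Set.ncard {x : F | g x = y} = 2

theorem stmt_13 {F : Type*} [Field F] [Fintype F] (m : ℕ) (hm : 3 ≤ m)
    (hq : Fintype.card F = 2 ^ m) (f : F → F)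
    (hperm : Function.Bijective f) (hf0 : f 0 = 0)
    (h2 : ∀ b : F, b ≠ 0 → TwoToOne (fun x => f x + b * x))
    (u₁ u₂ : F) (h12 : u₁ ≠ u₂) :
    Set.ncard {p : F × F | p.1 ≠ 0 ∧
        ({u₁, u₂} : Set F) ⊆ {y : F | ∃ x : F, y = f x + p.1 * x + p.2}} =
      2 ^ m * (2 ^ m - 2) / 4 := by
  classical
  set q := Fintype.card F with hqdef
  set S : Finset (F × F) := Finset.univ.filter (fun p => p.1 ≠ 0 ∧
      ({u₁, u₂} : Set F) ⊆ {y : F | ∃ x : F, y = f x + p.1 * x + p.2}) with hS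
  have hset : {p : F × F | p.1 ≠ 0 ∧
      ({u₁, u₂} : Set F) ⊆ {y : F | ∃ x : F, y = f x + p.1 * x + p.2}} = ↑S := by
    ext p; simp [hS]
  rw [hset, Set.ncard_coe_finset]
  have hmemS : ∀ p : F × F, p ∈ S ↔ p.1 ≠ 0 ∧ (∃ x, u₁ = f x + p.1 * x + p.2) ∧
      (∃ x, u₂ = f x + p.1 * x + p.2) := by
    intro p
    simp [hS, Set.insert_subset_iff, Set.singleton_subset_iff]
  set T : Finset (F × F) := Finset.univ.filter
      (fun p => p.1 ≠ p.2 ∧ f p.1 - f p.2 ≠ u₁ - u₂) with hT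
  set φ : F × F → F × F := fun p =>
    ((u₁ - u₂ - (f p.1 - f p.2)) / (p.1 - p.2),
      u₁ - f p.1 - ((u₁ - u₂ - (f p.1 - f p.2)) / (p.1 - p.2)) * p.1) with hφ
  have hmemT : ∀ p : F × F, p ∈ T ↔ p.1 ≠ p.2 ∧ f p.1 - f p.2 ≠ u₁ - u₂ := by
    intro p; simp [hT]
  -- φ maps T into S
  have hmaps : ∀ p ∈ T, φ p ∈ S := by
    rintro ⟨x, y⟩ hp
    rw [hmemT] at hp
    obtain ⟨hne, hne2⟩ := hp
    have hxy : x - y ≠ 0 := sub_ne_zero.mpr hne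
    have hnum : u₁ - u₂ - (f x - f y) ≠ 0 := sub_ne_zero.mpr (Ne.symm hne2)
    have hφval : φ (x, y) = ((u₁ - u₂ - (f x - f y)) / (x - y),
        u₁ - f x - ((u₁ - u₂ - (f x - f y)) / (x - y)) * x) := rfl
    rw [hmemS, hφval]
    set b := (u₁ - u₂ - (f x - f y)) / (x - y) with hbdef
    have hb : b * (x - y) = u₁ - u₂ - (f x - f y) := div_mul_cancel₀ _ hxy
    refine ⟨div_ne_zero hnum hxy, ⟨x, by ring⟩, ⟨y, by linear_combination hb⟩⟩
  -- each fiber over S has exactly 4 elements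
  have hfiber : ∀ s ∈ S, (T.filter (fun p => φ p = s)).card = 4 := by
    rintro ⟨b, c⟩ hs
    rw [hmemS] at hs
    obtain ⟨hb0, ⟨x₁, hx₁⟩, ⟨x₂, hx₂⟩⟩ := hs
    simp only at hb0 hx₁ hx₂
    have key : T.filter (fun p => φ p = (b, c)) =
        (Finset.univ.filter fun x => f x + b * x + c = u₁) ×ˢ
        (Finset.univ.filter fun y => f y + b * y + c = u₂) := by
      ext ⟨x, y⟩
      simp only [Finset.mem_filter, Finset.mem_product, Finset.mem_univ, true_and]
      rw [hmemT]
      simp only []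
      constructor
      · rintro ⟨⟨hne, hne2⟩, hφp⟩
        have hxy : x - y ≠ 0 := sub_ne_zero.mpr hne
        have hb' : (u₁ - u₂ - (f x - f y)) / (x - y) = b := congrArg Prod.fst hφp
        have hc' : u₁ - f x - ((u₁ - u₂ - (f x - f y)) / (x - y)) * x = c :=
          congrArg Prod.snd hφp
        rw [hb'] at hc'
        rw [div_eq_iff hxy] at hb'
        constructor
        · linear_combination -hc'
        · linear_combination hb' - hc'
      · rintro ⟨h1, h2⟩
        have hne : x ≠ y := by
          intro h; apply h12; rw [← h1, ← h2, h]
        have hxy : x - y ≠ 0 := sub_ne_zero.mpr hne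
        have hfx : f x - f y = u₁ - u₂ - b * (x - y) := by linear_combination h1 - h2
        have hne2 : f x - f y ≠ u₁ - u₂ := by
          rw [hfx]
          intro h
          have hz : b * (x - y) = 0 := by linear_combination -h
          rcases mul_eq_zero.mp hz with h' | h'
          · exact hb0 h'
          · exact hxy h'
        have hb' : (u₁ - u₂ - (f x - f y)) / (x - y) = b := by
          rw [hfx]
          field_simp
          ring
        refine ⟨⟨hne, hne2⟩, ?_⟩
        have hφval : φ (x, y) = ((u₁ - u₂ - (f x - f y)) / (x - y),
            u₁ - f x - ((u₁ - u₂ - (f x - f y)) / (x - y)) * x) := rfl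
        rw [hφval, hb']
        refine Prod.ext rfl ?_
        show u₁ - f x - b * x = c
        linear_combination -h1
    rw [key, Finset.card_product]
    have c1 : (Finset.univ.filter fun x => f x + b * x + c = u₁).card = 2 := by
      have hex : ∃ x, f x + b * x = u₁ - c := ⟨x₁, by linear_combination -hx₁⟩
      have h := h2 b hb0 (u₁ - c) hex
      have hseteq : {x : F | f x + b * x = u₁ - c} =
          ↑(Finset.univ.filter fun x => f x + b * x + c = u₁) := by
        ext x; simp [eq_sub_iff_add_eq]
      rw [hseteq, Set.ncard_coe_finset] at h
      exact h
    have c2 : (Finset.univ.filter fun y => f y + b * y + c = u₂).card = 2 := by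
      have hex : ∃ x, f x + b * x = u₂ - c := ⟨x₂, by linear_combination -hx₂⟩
      have h := h2 b hb0 (u₂ - c) hex
      have hseteq : {x : F | f x + b * x = u₂ - c} =
          ↑(Finset.univ.filter fun y => f y + b * y + c = u₂) := by
        ext x; simp [eq_sub_iff_add_eq]
      rw [hseteq, Set.ncard_coe_finset] at h
      exact h
    rw [c1, c2]
  have hTS : T.card = S.card * 4 := by
    rw [Finset.card_eq_sum_card_fiberwise hmaps, Finset.sum_congr rfl hfiber,
      Finset.sum_const, smul_eq_mul]
  -- card of T
  have hNe : (Finset.univ.filter (fun p : F × F => p.1 ≠ p.2)).card = q * q - q := by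
    have h' : (Finset.univ.filter (fun p : F × F => p.1 ≠ p.2)) =
        (Finset.univ : Finset F).offDiag := by
      ext p; simp [Finset.mem_offDiag]
    rw [h', Finset.offDiag_card, Finset.card_univ]
  have hEq : (Finset.univ.filter
      (fun p : F × F => p.1 ≠ p.2 ∧ f p.1 - f p.2 = u₁ - u₂)).card = q := by
    set e := Equiv.ofBijective f hperm with he
    have hef : ∀ x, e x = f x := fun x => rfl
    have himg : (Finset.univ.filter
        (fun p : F × F => p.1 ≠ p.2 ∧ f p.1 - f p.2 = u₁ - u₂)) =
        Finset.univ.image (fun y => (e.symm (f y + (u₁ - u₂)), y)) := by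
      ext ⟨x, y⟩
      simp only [Finset.mem_filter, Finset.mem_image, Finset.mem_univ, true_and,
        Prod.mk.injEq]
      constructor
      · rintro ⟨hne, heq⟩
        refine ⟨y, ?_, rfl⟩
        rw [Equiv.symm_apply_eq, hef x]
        linear_combination -heq
      · rintro ⟨z, hz1, hz2⟩
        subst hz2
        have hfx : f x = f z + (u₁ - u₂) := by
          have h' := e.apply_symm_apply (f z + (u₁ - u₂))
          rw [hz1, hef x] at h'
          exact h'
        constructor
        · intro h
          apply sub_ne_zero.mpr h12
          rw [h] at hfx
          linear_combination -hfx
        · linear_combination hfx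
    rw [himg, Finset.card_image_of_injective _ (fun a b h => congrArg Prod.snd h),
      Finset.card_univ]
  have hTcard : T.card = q * q - q - q := by
    have hsplit := Finset.card_filter_add_card_filter_not
      (s := Finset.univ.filter (fun p : F × F => p.1 ≠ p.2))
      (p := fun p : F × F => f p.1 - f p.2 = u₁ - u₂)
    have hsub : Finset.univ.filter
        (fun p : F × F => p.1 ≠ p.2 ∧ f p.1 - f p.2 = u₁ - u₂) ⊆
        Finset.univ.filter (fun p : F × F => p.1 ≠ p.2) := by
      intro p
      simp only [Finset.mem_filter]
      tauto
    have hTeq : T = Finset.univ.filter (fun p : F × F => p.1 ≠ p.2) \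
        Finset.univ.filter (fun p : F × F => p.1 ≠ p.2 ∧ f p.1 - f p.2 = u₁ - u₂) := by
      ext p
      simp only [hT, Finset.mem_sdiff, Finset.mem_filter, Finset.mem_univ, true_and]
      tauto
    rw [hTeq, Finset.card_sdiff_of_subset hsub, hEq, hNe]
  -- final arithmetic
  rw [← hq]
  have hq2 : 2 ≤ q := by
    rw [hq]
    calc 2 = 2 ^ 1 := rfl
    _ ≤ 2 ^ m := Nat.pow_le_pow_right (by norm_num) (by omega)
  have key : q * (q - 2) + q + q = q * q := by
    have h' : (q - 2) + 2 = q := Nat.sub_add_cancel hq2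
    calc q * (q - 2) + q + q = q * ((q - 2) + 2) := by ring
    _ = q * q := by rw [h']
  have h4 : S.card * 4 = q * q - q - q := by rw [← hTS, hTcard]
  generalize hA : q * q = A at key h4
  generalize hB : q * (q - 2) = B at key ⊢
  omega
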